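/- Let G be a finite simple isolate-free graph with maximum degree Δ(G) = 3, and let Ψ be a total coalition partition of G. If V₁, V₂, V₃, V₄, V₅, V₆ are six pairwise distinct classes of Ψ such that V₁V₂, V₂V₃, V₃V₄, V₄V₅ and V₅V₆ are all total coalitions (i.e., they form a path on 6 vertices in the total coalition graph TCG(G,Ψ)), then V₂ ∪ V₅ is a total dominating set of G; hence V₂ and V₅ also form a total coalition. -/

import Mathlib

open scoped Classical

variable {V : Type*}

/-- `S` is a total dominating set of `G`: every vertex of `G` has a neighbor in `S`. -/
def TotalDomSet (G : SimpleGraph V) (S : Finset V) : Prop :=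
  ∀ v : V, ∃ u ∈ S, G.Adj v u

/-- Two disjoint sets `A`, `B` form a total coalition in `G` if neither is a total
dominating set but their union is. -/
def TotalCoalition [DecidableEq V] (G : SimpleGraph V) (A B : Finset V) : Prop :=
  Disjoint A B ∧ ¬ TotalDomSet G A ∧ ¬ TotalDomSet G B ∧ TotalDomSet G (A ∪ B)

/-- A graph is isolate-free if every vertex has a neighbor. -/
def IsolateFree (G : SimpleGraph V) : Prop :=
  ∀ v : V, ∃ u : V, G.Adj v u

/-- `Ψ` is a total coalition partition of `G`: a partition of the vertex set into
nonempty classes, none of which is a total dominating set, such that every class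
forms a total coalition with at least one other class. -/
def IsTCPartition [DecidableEq V] (G : SimpleGraph V) (Ψ : Finset (Finset V)) : Prop :=
  (∀ C ∈ Ψ, C.Nonempty) ∧
  (∀ v : V, ∃! C, C ∈ Ψ ∧ v ∈ C) ∧
  (∀ C ∈ Ψ, ¬ TotalDomSet G C) ∧
  (∀ C ∈ Ψ, ∃ D ∈ Ψ, D ≠ C ∧ TotalCoalition G C D)

/-- The total coalition graph `TCG(G,Ψ)`: vertices are the classes of `Ψ`, and two
classes are adjacent iff they form a total coalition. -/
def TCG [DecidableEq V] (G : SimpleGraph V) (Ψ : Finset (Finset V)) :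
    SimpleGraph {C // C ∈ Ψ} where
  Adj C D := C ≠ D ∧ TotalCoalition G (C : Finset V) (D : Finset V)
  symm := by
    refine ⟨?_⟩
    rintro C D ⟨hne, hd, hA, hB, hU⟩
    exact ⟨hne.symm, hd.symm, hB, hA, by rwa [Finset.union_comm]⟩
  loopless := ⟨by rintro C ⟨hne, _⟩; exact hne rfl⟩

/-- If `Δ(G) = 3` and six pairwise distinct classes of a total coalition partition form
a path `V₁V₂V₃V₄V₅V₆` in the total coalition graph, then `V₂ ∪ V₅` is a total
dominating set, hence `V₂` and `V₅` form a total coalition. -/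
theorem statement_17 [Fintype V] [DecidableEq V]
    (G : SimpleGraph V) [DecidableRel G.Adj] (hG : IsolateFree G)
    (hΔ : G.maxDegree = 3)
    (Ψ : Finset (Finset V)) (hΨ : IsTCPartition G Ψ)
    (V₁ V₂ V₃ V₄ V₅ V₆ : Finset V)
    (h1 : V₁ ∈ Ψ) (h2 : V₂ ∈ Ψ) (h3 : V₃ ∈ Ψ) (h4 : V₄ ∈ Ψ) (h5 : V₅ ∈ Ψ) (h6 : V₆ ∈ Ψ)
    (hdist : [V₁, V₂, V₃, V₄, V₅, V₆].Pairwise (· ≠ ·))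
    (h12 : TotalCoalition G V₁ V₂) (h23 : TotalCoalition G V₂ V₃)
    (h34 : TotalCoalition G V₃ V₄) (h45 : TotalCoalition G V₄ V₅)
    (h56 : TotalCoalition G V₅ V₆) :
    TotalDomSet G (V₂ ∪ V₅) ∧ TotalCoalition G V₂ V₅ := by
  obtain ⟨hne, huniq, hnot, _⟩ := hΨ
  have hdisj : ∀ A B : Finset V, A ∈ Ψ → B ∈ Ψ → A ≠ B → Disjoint A B := by
    intro A B hA hB hAB
    rw [Finset.disjoint_left]
    intro v hvA hvB
    obtain ⟨C, _, hCu⟩ := huniq v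
    exact hAB ((hCu A ⟨hA, hvA⟩).trans (hCu B ⟨hB, hvB⟩).symm)
  simp only [List.pairwise_cons, List.mem_cons, List.mem_singleton,
    List.not_mem_nil] at hdist
  obtain ⟨hd1, hd2, hd3, hd4, hd5, -⟩ := hdist
  have n13 : V₁ ≠ V₃ := hd1 V₃ (by simp)
  have n14 : V₁ ≠ V₄ := hd1 V₄ (by simp)
  have n16 : V₁ ≠ V₆ := hd1 V₆ (by simp)
  have n25 : V₂ ≠ V₅ := hd2 V₅ (by simp)
  have n34 : V₃ ≠ V₄ := hd3 V₄ (by simp)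
  have n36 : V₃ ≠ V₆ := hd3 V₆ (by simp)
  have n46 : V₄ ≠ V₆ := hd4 V₆ (by simp)
  have hTD : TotalDomSet G (V₂ ∪ V₅) := by
    intro v
    by_contra hv
    push_neg at hv
    obtain ⟨u1, hu1, ha1⟩ := h12.2.2.2 v
    obtain ⟨u3, hu3, ha3⟩ := h23.2.2.2 v
    obtain ⟨u4, hu4, ha4⟩ := h45.2.2.2 v
    obtain ⟨u6, hu6, ha6⟩ := h56.2.2.2 v
    have m1 : u1 ∈ V₁ := by
      rcases Finset.mem_union.1 hu1 with h | h
      · exact h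
      · exact absurd ha1 (hv u1 (Finset.mem_union_left _ h))
    have m3 : u3 ∈ V₃ := by
      rcases Finset.mem_union.1 hu3 with h | h
      · exact absurd ha3 (hv u3 (Finset.mem_union_left _ h))
      · exact h
    have m4 : u4 ∈ V₄ := by
      rcases Finset.mem_union.1 hu4 with h | h
      · exact h
      · exact absurd ha4 (hv u4 (Finset.mem_union_right _ h))
    have m6 : u6 ∈ V₆ := by
      rcases Finset.mem_union.1 hu6 with h | h
      · exact absurd ha6 (hv u6 (Finset.mem_union_right _ h))
      · exact h
    have ne13 : u1 ≠ u3 := fun h => (Finset.disjoint_left.1 (hdisj _ _ h1 h3 n13)) m1 (h ▸ m3)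
    have ne14 : u1 ≠ u4 := fun h => (Finset.disjoint_left.1 (hdisj _ _ h1 h4 n14)) m1 (h ▸ m4)
    have ne16 : u1 ≠ u6 := fun h => (Finset.disjoint_left.1 (hdisj _ _ h1 h6 n16)) m1 (h ▸ m6)
    have ne34 : u3 ≠ u4 := fun h => (Finset.disjoint_left.1 (hdisj _ _ h3 h4 n34)) m3 (h ▸ m4)
    have ne36 : u3 ≠ u6 := fun h => (Finset.disjoint_left.1 (hdisj _ _ h3 h6 n36)) m3 (h ▸ m6)
    have ne46 : u4 ≠ u6 := fun h => (Finset.disjoint_left.1 (hdisj _ _ h4 h6 n46)) m4 (h ▸ m6)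
    have hsub : ({u1, u3, u4, u6} : Finset V) ⊆ G.neighborFinset v := by
      intro x hx
      simp only [Finset.mem_insert, Finset.mem_singleton] at hx
      rcases hx with rfl | rfl | rfl | rfl <;>
        simp only [SimpleGraph.mem_neighborFinset] <;> assumption
    have hcard : ({u1, u3, u4, u6} : Finset V).card = 4 := by
      rw [Finset.card_insert_of_notMem (by simp [ne13, ne14, ne16]),
        Finset.card_insert_of_notMem (by simp [ne34, ne36]),
        Finset.card_insert_of_notMem (by simp [ne46]), Finset.card_singleton]
    have h4le : 4 ≤ G.degree v := by
      rw [← hcard, ← SimpleGraph.card_neighborFinset_eq_degree]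
      exact Finset.card_le_card hsub
    have := G.degree_le_maxDegree v
    omega
  exact ⟨hTD, hdisj _ _ h2 h5 n25, hnot V₂ h2, hnot V₅ h5, hTD⟩
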